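/- Let X be a compact metric space, Γ a monoid acting minimally on X by continuous maps, and H a real separable Hilbert space. Let (Ψ, ρ) be a continuous cocycle of affine isometries of H over this action. If there exist a point x₀ ∈ X, a vector v₀ ∈ H and a constant C ≥ 0 such that ‖Ψ(f,x₀)(v₀) + ρ(f,x₀)‖ ≤ C for every f ∈ Γ, then there exists a continuous map φ : X → H such that φ(f·x) = Ψ(f,x)(φ(x)) + ρ(f,x) for all f ∈ Γ and all x ∈ X. -/

import Mathlib

set_option linter.unusedSectionVars false
set_option linter.unusedVariables false
set_option maxHeartbeats 1600000

namespace CocycleAux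


variable {X : Type*} [MetricSpace X]
variable {H : Type*} [NormedAddCommGroup H] [InnerProductSpace ℝ H]
variable {Γ : Type*}

/-- Set of eventual upper bounds for squared distances to the orbit vectors near `x`. -/
def Tset (π : Γ → X) (a : Γ → H) (x : X) (v : H) : Set ℝ :=
  {t | ∃ ε > (0:ℝ), ∀ f, dist (π f) x < ε → ‖v - a f‖ ^ 2 ≤ t}

/-- Squared asymptotic radius. -/
noncomputable def Rq (π : Γ → X) (a : Γ → H) (x : X) (v : H) : ℝ := sInf (Tset π a x v)

variable {π : Γ → X} {a : Γ → H} {C : ℝ}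

lemma mem_Tset_of_bound (hbd : ∀ f, ‖a f‖ ≤ C) (x : X) (v : H) :
    (‖v‖ + C) ^ 2 ∈ Tset π a x v := by
  refine ⟨1, one_pos, fun f _ => ?_⟩
  have h1 : ‖v - a f‖ ≤ ‖v‖ + C := (norm_sub_le _ _).trans (by linarith [hbd f])
  nlinarith [norm_nonneg (v - a f)]

lemma Tset_nonempty (hbd : ∀ f, ‖a f‖ ≤ C) (x : X) (v : H) :
    (Tset π a x v).Nonempty := ⟨_, mem_Tset_of_bound hbd x v⟩

lemma Tset_lb (hdense : ∀ (x : X) (ε : ℝ), 0 < ε → ∃ f, dist (π f) x < ε)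
    (x : X) (v : H) : ∀ t ∈ Tset π a x v, (0:ℝ) ≤ t := by
  rintro t ⟨ε, hε, hf⟩
  obtain ⟨f, hfx⟩ := hdense x ε hε
  exact le_trans (by positivity) (hf f hfx)

lemma Tset_bddBelow (hdense : ∀ (x : X) (ε : ℝ), 0 < ε → ∃ f, dist (π f) x < ε)
    (x : X) (v : H) : BddBelow (Tset π a x v) := ⟨0, Tset_lb hdense x v⟩

lemma Rq_nonneg (hdense : ∀ (x : X) (ε : ℝ), 0 < ε → ∃ f, dist (π f) x < ε)
    (hbd : ∀ f, ‖a f‖ ≤ C) (x : X) (v : H) : 0 ≤ Rq π a x v :=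
  le_csInf (Tset_nonempty hbd x v) (Tset_lb hdense x v)

lemma Rq_le (hdense : ∀ (x : X) (ε : ℝ), 0 < ε → ∃ f, dist (π f) x < ε)
    {x : X} {v : H} {t : ℝ} (ht : t ∈ Tset π a x v) : Rq π a x v ≤ t :=
  csInf_le (Tset_bddBelow hdense x v) ht

lemma Rq_lt_elim (hbd : ∀ f, ‖a f‖ ≤ C) {x : X} {v : H} {t : ℝ}
    (h : Rq π a x v < t) :
    ∃ ε > (0:ℝ), ∀ f, dist (π f) x < ε → ‖v - a f‖ ^ 2 ≤ t := by
  obtain ⟨s, ⟨ε, hε, hs⟩, hst⟩ := exists_lt_of_csInf_lt (Tset_nonempty hbd x v) h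
  exact ⟨ε, hε, fun f hf => (hs f hf).trans hst.le⟩

/-- Midpoint identity from the parallelogram law. -/
lemma midpoint_identity (u v w : H) :
    ‖(1/2 : ℝ) • (u + v) - w‖ ^ 2
      = ‖u - w‖ ^ 2 / 2 + ‖v - w‖ ^ 2 / 2 - ‖u - v‖ ^ 2 / 4 := by
  have e1 : (1/2 : ℝ) • (u + v) - w = (1/2 : ℝ) • (u - w) + (1/2 : ℝ) • (v - w) := by
    module
  have e2 : (1/2 : ℝ) • (u - w) - (1/2 : ℝ) • (v - w) = (1/2 : ℝ) • (u - v) := by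
    module
  have h := parallelogram_law_with_norm ℝ ((1/2 : ℝ) • (u - w)) ((1/2 : ℝ) • (v - w))
  rw [e2] at h
  rw [e1]
  have n1 : ‖(1/2 : ℝ) • (u - w)‖ = (1/2) * ‖u - w‖ := by
    rw [norm_smul]; norm_num
  have n2 : ‖(1/2 : ℝ) • (v - w)‖ = (1/2) * ‖v - w‖ := by
    rw [norm_smul]; norm_num
  have n3 : ‖(1/2 : ℝ) • (u - v)‖ = (1/2) * ‖u - v‖ := by
    rw [norm_smul]; norm_num
  rw [n1, n2, n3] at h
  nlinarith [h]


/-- Strong convexity of the squared asymptotic radius. -/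
lemma Rq_strong_convex (hdense : ∀ (x : X) (ε : ℝ), 0 < ε → ∃ f, dist (π f) x < ε)
    (hbd : ∀ f, ‖a f‖ ≤ C) (x : X) (u v : H) :
    Rq π a x ((1/2 : ℝ) • (u + v)) ≤ Rq π a x u / 2 + Rq π a x v / 2 - ‖u - v‖ ^ 2 / 4 := by
  apply le_of_forall_pos_le_add
  intro δ hδ
  obtain ⟨ε₁, hε₁, h₁⟩ := Rq_lt_elim hbd (lt_add_of_pos_right (Rq π a x u) hδ)
  obtain ⟨ε₂, hε₂, h₂⟩ := Rq_lt_elim hbd (lt_add_of_pos_right (Rq π a x v) hδ)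
  have hmem : (Rq π a x u + δ) / 2 + (Rq π a x v + δ) / 2 - ‖u - v‖ ^ 2 / 4
      ∈ Tset π a x ((1/2 : ℝ) • (u + v)) := by
    refine ⟨min ε₁ ε₂, lt_min hε₁ hε₂, fun f hf => ?_⟩
    have b1 := h₁ f (hf.trans_le (min_le_left _ _))
    have b2 := h₂ f (hf.trans_le (min_le_right _ _))
    have := midpoint_identity u v (a f)
    linarith
  have := Rq_le hdense hmem
  linarith

/-- Local Lipschitz-type estimate in the vector variable. -/
lemma Rq_cont_vec (hdense : ∀ (x : X) (ε : ℝ), 0 < ε → ∃ f, dist (π f) x < ε)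
    (hbd : ∀ f, ‖a f‖ ≤ C) (x : X) (u v : H) :
    Rq π a x u ≤ Rq π a x v + ‖u - v‖ * (2 * (‖v‖ + C) + ‖u - v‖) := by
  apply le_of_forall_pos_le_add
  intro δ hδ
  obtain ⟨ε, hε, h₁⟩ := Rq_lt_elim hbd (lt_add_of_pos_right (Rq π a x v) hδ)
  have hmem : (Rq π a x v + δ) + ‖u - v‖ * (2 * (‖v‖ + C) + ‖u - v‖)
      ∈ Tset π a x u := by
    refine ⟨ε, hε, fun f hf => ?_⟩
    have b1 := h₁ f hf
    have key : ‖u - a f‖ ≤ ‖v - a f‖ + ‖u - v‖ := by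
      have : u - a f = (v - a f) + (u - v) := by abel
      rw [this]
      exact norm_add_le _ _
    have hB : ‖v - a f‖ ≤ ‖v‖ + C := (norm_sub_le _ _).trans (by linarith [hbd f])
    nlinarith [norm_nonneg (u - a f), norm_nonneg (v - a f), norm_nonneg (u - v)]
  have := Rq_le hdense hmem
  linarith

/-- Upper semicontinuity in the base point. -/
lemma Rq_usc (hbd : ∀ f, ‖a f‖ ≤ C) {x : X} {v : H} {t : ℝ}
    (h : Rq π a x v < t)
    (hdense : ∀ (x : X) (ε : ℝ), 0 < ε → ∃ f, dist (π f) x < ε) :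
    ∃ δ > (0:ℝ), ∀ y, dist y x < δ → Rq π a y v ≤ t := by
  obtain ⟨ε, hε, h₁⟩ := Rq_lt_elim hbd h
  refine ⟨ε / 2, by positivity, fun y hy => ?_⟩
  refine Rq_le hdense ⟨ε / 2, by positivity, fun f hf => h₁ f ?_⟩
  have := dist_triangle (π f) y x
  linarith

/-- The infimum of the squared asymptotic radius over the fiber. -/
noncomputable def mVal (π : Γ → X) (a : Γ → H) (x : X) : ℝ :=
  sInf (Set.range fun v => Rq π a x v)

lemma mVal_le (hdense : ∀ (x : X) (ε : ℝ), 0 < ε → ∃ f, dist (π f) x < ε)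
    (hbd : ∀ f, ‖a f‖ ≤ C) (x : X) (v : H) : mVal π a x ≤ Rq π a x v :=
  csInf_le ⟨0, by rintro r ⟨w, rfl⟩; exact Rq_nonneg hdense hbd x w⟩ ⟨v, rfl⟩

lemma mVal_nonneg (hdense : ∀ (x : X) (ε : ℝ), 0 < ε → ∃ f, dist (π f) x < ε)
    (hbd : ∀ f, ‖a f‖ ≤ C) (x : X) : 0 ≤ mVal π a x :=
  le_csInf ⟨_, ⟨0, rfl⟩⟩ (by rintro r ⟨w, rfl⟩; exact Rq_nonneg hdense hbd x w)

/-- Existence of the minimizer (asymptotic center). -/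
lemma exists_min [CompleteSpace H]
    (hdense : ∀ (x : X) (ε : ℝ), 0 < ε → ∃ f, dist (π f) x < ε)
    (hbd : ∀ f, ‖a f‖ ≤ C) (hC : 0 ≤ C) (x : X) :
    ∃ v, Rq π a x v ≤ mVal π a x := by
  have hne : (Set.range fun v => Rq π a x v).Nonempty := ⟨_, ⟨0, rfl⟩⟩
  have hsel : ∀ n : ℕ, ∃ v : H, Rq π a x v < mVal π a x + 1 / (n + 1) := by
    intro n
    have hlt : mVal π a x < mVal π a x + 1 / (n + 1) := by
      have : (0:ℝ) < 1 / (n + 1) := by positivity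
      linarith
    obtain ⟨r, ⟨v, rfl⟩, hr⟩ := exists_lt_of_csInf_lt hne hlt
    exact ⟨v, hr⟩
  choose v hv using hsel
  set m := mVal π a x with hm
  have hdiff : ∀ n k : ℕ, ‖v n - v k‖ ^ 2 ≤ 2 / (n + 1) + 2 / (k + 1) := by
    intro n k
    have hsc := Rq_strong_convex hdense hbd x (v n) (v k)
    have hmid : m ≤ Rq π a x ((1/2 : ℝ) • (v n + v k)) := mVal_le hdense hbd x _
    have h1 := hv n
    have h2 := hv k
    have e1 : (1:ℝ) / (n + 1) = 1 / (n+1) := rfl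
    have : ‖v n - v k‖ ^ 2 / 4 ≤ (1 / (n+1) + 1 / (k+1)) / 2 := by linarith
    have h4 : (2:ℝ) / (n+1) = 2 * (1/(n+1)) := by ring
    have h5 : (2:ℝ) / (k+1) = 2 * (1/(k+1)) := by ring
    linarith
  have hcauchy : CauchySeq v := by
    rw [Metric.cauchySeq_iff']
    intro ε hε
    obtain ⟨N, hN⟩ := exists_nat_gt (4 / ε ^ 2)
    refine ⟨N, fun n hn => ?_⟩
    have hb : ‖v n - v N‖ ^ 2 ≤ 2 / (n + 1) + 2 / (N + 1) := hdiff n N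
    have hmono : (2:ℝ) / (n + 1) ≤ 2 / (N + 1) := by
      apply div_le_div_of_nonneg_left (by norm_num) (by positivity)
      have : (N:ℝ) ≤ n := Nat.cast_le.mpr hn
      linarith
    have hN1 : (0:ℝ) < N + 1 := by positivity
    have h4N : 4 / ((N:ℝ) + 1) < ε ^ 2 := by
      rw [div_lt_iff₀ hN1]
      have hε2 : (0:ℝ) < ε ^ 2 := by positivity
      rw [div_lt_iff₀ hε2] at hN
      nlinarith
    have hlt : ‖v n - v N‖ ^ 2 < ε ^ 2 := by
      have : (2:ℝ) / (n + 1) + 2 / (N + 1) ≤ 4 / (N + 1) := by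
        rw [show (4:ℝ) / (N+1) = 2/(N+1) + 2/(N+1) by ring]
        linarith
      linarith
    rw [dist_eq_norm]
    nlinarith [norm_nonneg (v n - v N)]
  obtain ⟨w, hw⟩ := cauchySeq_tendsto_of_complete hcauchy
  refine ⟨w, ?_⟩
  apply le_of_forall_pos_le_add
  intro δ hδ
  set K := 2 * (‖w‖ + 1 + C) + 1 with hK
  have hKpos : (0:ℝ) < K := by positivity
  have hd0 : Filter.Tendsto (fun n => dist (v n) w) Filter.atTop (nhds 0) :=
    tendsto_iff_dist_tendsto_zero.mp hw
  have hev1 : ∀ᶠ n in Filter.atTop, dist (v n) w < min 1 (δ / (2 * K)) := by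
    apply hd0.eventually_lt_const
    exact lt_min one_pos (by positivity)
  have hev2 : ∀ᶠ n : ℕ in Filter.atTop, (1:ℝ) / ((n:ℝ) + 1) < δ / 2 := by
    apply tendsto_one_div_add_atTop_nhds_zero_nat.eventually_lt_const
    positivity
  obtain ⟨n, h1, h2⟩ := (hev1.and hev2).exists
  have hd : ‖w - v n‖ = dist (v n) w := by rw [dist_comm, dist_eq_norm]
  have hle := Rq_cont_vec hdense hbd x w (v n)
  have hvn : ‖v n‖ ≤ ‖w‖ + 1 := by
    have : ‖v n‖ ≤ ‖w‖ + ‖v n - w‖ := by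
      have := norm_add_le (w) (v n - w)
      simpa using this
    have h3 : ‖v n - w‖ = dist (v n) w := (dist_eq_norm _ _).symm
    have := h1.trans_le (min_le_left _ _)
    rw [← h3] at this
    linarith
  have hfac : 2 * (‖v n‖ + C) + ‖w - v n‖ ≤ K := by
    have h3 := h1.trans_le (min_le_left _ _)
    rw [hd]
    rw [hK]; linarith
  have hsmall : ‖w - v n‖ * K < δ / 2 := by
    rw [hd]
    have h3 := h1.trans_le (min_le_right _ _)
    calc dist (v n) w * K < (δ / (2 * K)) * K := by
          apply mul_lt_mul_of_pos_right h3 hKpos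
    _ = δ / 2 := by field_simp
  have hmul : ‖w - v n‖ * (2 * (‖v n‖ + C) + ‖w - v n‖) ≤ ‖w - v n‖ * K :=
    mul_le_mul_of_nonneg_left hfac (norm_nonneg _)
  have hvn2 := hv n
  have : Rq π a x w < m + (δ/2 + δ/2) := by
    calc Rq π a x w ≤ Rq π a x (v n) + ‖w - v n‖ * (2 * (‖v n‖ + C) + ‖w - v n‖) := hle
      _ ≤ Rq π a x (v n) + ‖w - v n‖ * K := by linarith
      _ < (m + 1/(n+1)) + δ/2 := by linarith
      _ < m + (δ/2 + δ/2) := by linarith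
  linarith

/-- Uniqueness of the minimizer. -/
lemma unique_min (hdense : ∀ (x : X) (ε : ℝ), 0 < ε → ∃ f, dist (π f) x < ε)
    (hbd : ∀ f, ‖a f‖ ≤ C) {x : X} {u w : H}
    (hu : Rq π a x u ≤ mVal π a x) (hw : Rq π a x w ≤ mVal π a x) : u = w := by
  have hsc := Rq_strong_convex hdense hbd x u w
  have hmid : mVal π a x ≤ Rq π a x ((1/2 : ℝ) • (u + w)) := mVal_le hdense hbd x _
  have : ‖u - w‖ ^ 2 ≤ 0 := by linarith
  have : ‖u - w‖ = 0 := by nlinarith [norm_nonneg (u - w)]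
  have := norm_sub_eq_zero_iff.mp this
  exact this

/-- Transport inequality along an (approximate) conjugation. -/
lemma Rq_transport (hdense : ∀ (x : X) (ε : ℝ), 0 < ε → ∃ f, dist (π f) x < ε)
    (hbd : ∀ f, ‖a f‖ ≤ C) (hC : 0 ≤ C) {x y : X} {J : H → H}
    (hJ : ∀ u w : H, ‖J u - J w‖ = ‖u - w‖) {σ : Γ → Γ}
    (happrox : ∀ ε > (0:ℝ), ∀ η > (0:ℝ), ∃ ε' > (0:ℝ), ∀ f, dist (π f) x < ε' →
      dist (π (σ f)) y < ε ∧ ‖a (σ f) - J (a f)‖ ≤ η) (v : H) :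
    Rq π a x v ≤ Rq π a y (J v) := by
  apply le_csInf (Tset_nonempty hbd y (J v))
  rintro t ⟨ε, hε, hT⟩
  have ht0 : 0 ≤ t := Tset_lb hdense y (J v) t ⟨ε, hε, hT⟩
  apply le_of_forall_pos_le_add
  intro δ hδ
  set B := ‖J v‖ + C with hB
  have hB0 : 0 ≤ B := by positivity
  set η := min 1 (δ / (2 * B + 1)) with hη
  have hηpos : 0 < η := lt_min one_pos (by positivity)
  obtain ⟨ε', hε', hf⟩ := happrox ε hε η hηpos
  have hmem : t + δ ∈ Tset π a x v := by
    refine ⟨ε', hε', fun f hfx => ?_⟩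
    obtain ⟨hnear, hclose⟩ := hf f hfx
    have h1 : ‖J v - a (σ f)‖ ^ 2 ≤ t := hT (σ f) hnear
    have h2 : ‖J v - a (σ f)‖ ≤ B := by
      rw [hB]
      exact (norm_sub_le _ _).trans (by linarith [hbd (σ f)])
    have h3 : ‖v - a f‖ ≤ ‖J v - a (σ f)‖ + η := by
      rw [← hJ v (a f)]
      have : J v - J (a f) = (J v - a (σ f)) + (a (σ f) - J (a f)) := by abel
      rw [this]
      exact (norm_add_le _ _).trans (by linarith)
    have hη1 : η ≤ 1 := min_le_left _ _
    have hη2 : η ≤ δ / (2 * B + 1) := min_le_right _ _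
    have hη3 : η * (2 * B + 1) ≤ δ := by
      rw [← le_div_iff₀ (by positivity)]
      exact hη2
    nlinarith [norm_nonneg (v - a f), norm_nonneg (J v - a (σ f))]
  have := Rq_le hdense hmem
  linarith


end CocycleAux


open CocycleAux in
/-- **Main Theorem** (Hilbert space fibers): a continuous cocycle of affine isometries of a
real separable Hilbert space over a minimal monoid action on a compact metric space that has
a bounded orbit admits a continuous invariant section. -/
theorem main_theorem_hilbert
    {X : Type*} [MetricSpace X] [CompactSpace X]
    {Γ : Type*} [Monoid Γ]
    {H : Type*} [NormedAddCommGroup H] [InnerProductSpace ℝ H] [CompleteSpace H]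
    [TopologicalSpace.SeparableSpace H]
    (act : Γ → X → X)
    (hact_one : ∀ x, act 1 x = x)
    (hact_mul : ∀ f g x, act (f * g) x = act f (act g x))
    (hact_cont : ∀ f, Continuous (act f))
    (hmin : ∀ x, Dense (Set.range fun f => act f x))
    (Ψ : Γ → X → (H ≃ₗᵢ[ℝ] H)) (ρ : Γ → X → H)
    (hΨ_cont : ∀ f, Continuous fun x =>
      ((Ψ f x).toLinearIsometry.toContinuousLinearMap : H →L[ℝ] H))
    (hρ_cont : ∀ f, Continuous fun x => ρ f x)
    (hΨ_coc : ∀ f g x v, Ψ (f * g) x v = Ψ f (act g x) (Ψ g x v))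
    (hρ_coc : ∀ f g x, ρ (f * g) x = ρ f (act g x) + Ψ f (act g x) (ρ g x))
    (x₀ : X) (v₀ : H) (C : ℝ) (hC : 0 ≤ C)
    (hbound : ∀ f, ‖Ψ f x₀ v₀ + ρ f x₀‖ ≤ C) :
    ∃ φ : X → H, Continuous φ ∧ ∀ f x, φ (act f x) = Ψ f x (φ x) + ρ f x := by
  classical
  set π : Γ → X := fun f => act f x₀ with hπ
  set a : Γ → H := fun f => Ψ f x₀ v₀ + ρ f x₀ with ha
  have hbd : ∀ f, ‖a f‖ ≤ C := hbound
  -- density of the orbit of any point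
  have hdenseO : ∀ (y x : X) (ε : ℝ), 0 < ε → ∃ f, dist (act f y) x < ε := by
    intro y x ε hε
    have hd := (Metric.dense_iff).mp (hmin y) x ε hε
    obtain ⟨z, hz⟩ := hd
    obtain ⟨hz1, f, hf⟩ := hz
    refine ⟨f, ?_⟩
    have : act f y = z := hf
    rw [this]
    exact Metric.mem_ball.mp hz1
  have hdense : ∀ (x : X) (ε : ℝ), 0 < ε → ∃ f, dist (π f) x < ε := fun x ε hε =>
    hdenseO x₀ x ε hε
  -- the minimizer (asymptotic center) in each fiber
  have hminsel : ∀ x : X, ∃ v, Rq π a x v ≤ mVal π a x := fun x =>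
    exists_min hdense hbd hC x
  choose φ hφ using hminsel
  have hφeq : ∀ x, Rq π a x (φ x) = mVal π a x := fun x =>
    le_antisymm (hφ x) (mVal_le hdense hbd x (φ x))
  -- transport inequality
  have htrans : ∀ (g : Γ) (x : X) (v : H),
      Rq π a x v ≤ Rq π a (act g x) (Ψ g x v + ρ g x) := by
    intro g x v
    have hJ : ∀ u w : H, ‖(Ψ g x u + ρ g x) - (Ψ g x w + ρ g x)‖ = ‖u - w‖ := by
      intro u w
      have : (Ψ g x u + ρ g x) - (Ψ g x w + ρ g x) = Ψ g x (u - w) := by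
        rw [map_sub]; abel
      rw [this, (Ψ g x).norm_map]
    refine Rq_transport hdense hbd hC hJ (σ := fun f => g * f) ?_ v
    intro ε hε η hη
    -- continuity of the base map at x
    obtain ⟨δ₁, hδ₁, hc1⟩ := Metric.continuousAt_iff.mp (hact_cont g).continuousAt ε hε
    -- continuity of the linear part at x
    have hηC : (0:ℝ) < η / (2 * (C + 1)) := by positivity
    obtain ⟨δ₂, hδ₂, hc2⟩ := Metric.continuousAt_iff.mp (hΨ_cont g).continuousAt _ hηC
    -- continuity of the translation part at x
    obtain ⟨δ₃, hδ₃, hc3⟩ := Metric.continuousAt_iff.mp (hρ_cont g).continuousAt (η/2)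
      (by positivity)
    refine ⟨min δ₁ (min δ₂ δ₃), by positivity, fun f hf => ?_⟩
    have hf1 : dist (π f) x < δ₁ := hf.trans_le (min_le_left _ _)
    have hf2 : dist (π f) x < δ₂ := hf.trans_le ((min_le_right _ _).trans (min_le_left _ _))
    have hf3 : dist (π f) x < δ₃ := hf.trans_le ((min_le_right _ _).trans (min_le_right _ _))
    set z : X := act f x₀ with hz
    have hπz : π f = z := rfl
    constructor
    · have : π (g * f) = act g z := by
        show act (g * f) x₀ = act g z
        rw [hact_mul]
      rw [this]
      exact hc1 hf1
    · -- cocycle identity for a (g * f)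
      have hcoc : a (g * f) = Ψ g z (a f) + ρ g z := by
        show Ψ (g * f) x₀ v₀ + ρ (g * f) x₀ = Ψ g z (Ψ f x₀ v₀ + ρ f x₀) + ρ g z
        rw [hΨ_coc, hρ_coc, map_add]
        abel
      rw [hcoc]
      have hrw : Ψ g z (a f) + ρ g z - (Ψ g x (a f) + ρ g x)
          = (Ψ g z (a f) - Ψ g x (a f)) + (ρ g z - ρ g x) := by abel
      rw [hrw]
      have hop : ‖Ψ g z (a f) - Ψ g x (a f)‖ ≤ η / 2 := by
        have hd2 := hc2 hf2
        rw [dist_eq_norm] at hd2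
        have happ : Ψ g z (a f) - Ψ g x (a f)
            = ((Ψ g z).toLinearIsometry.toContinuousLinearMap
              - (Ψ g x).toLinearIsometry.toContinuousLinearMap) (a f) := by
          simp
        rw [happ]
        have hb := ContinuousLinearMap.le_opNorm
          ((Ψ g z).toLinearIsometry.toContinuousLinearMap
            - (Ψ g x).toLinearIsometry.toContinuousLinearMap) (a f)
        have h2 : ‖(Ψ g z).toLinearIsometry.toContinuousLinearMap
            - (Ψ g x).toLinearIsometry.toContinuousLinearMap‖ * ‖a f‖
            ≤ (η / (2 * (C + 1))) * C := by
          apply mul_le_mul hd2.le (hbd f) (norm_nonneg _) hηC.le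
        have h3 : (η / (2 * (C + 1))) * C ≤ η / 2 := by
          rw [div_mul_eq_mul_div, div_le_div_iff₀ (by linarith) (by norm_num)]
          nlinarith
        linarith [hb]
      have hρd := hc3 hf3
      rw [dist_eq_norm] at hρd
      calc ‖(Ψ g z (a f) - Ψ g x (a f)) + (ρ g z - ρ g x)‖
          ≤ ‖Ψ g z (a f) - Ψ g x (a f)‖ + ‖ρ g z - ρ g x‖ := norm_add_le _ _
        _ ≤ η / 2 + η / 2 := by linarith [hρd.le]
        _ = η := by ring
  -- mVal is monotone along the action
  have hmono : ∀ (g : Γ) (x : X), mVal π a x ≤ mVal π a (act g x) := by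
    intro g x
    refine le_csInf ⟨Rq π a (act g x) 0, ⟨0, rfl⟩⟩ ?_
    rintro r ⟨w, rfl⟩
    set u : H := (Ψ g x).symm (w - ρ g x) with hu
    have hJu : Ψ g x u + ρ g x = w := by
      rw [hu, (Ψ g x).apply_symm_apply]; abel
    calc mVal π a x ≤ Rq π a x u := mVal_le hdense hbd x u
      _ ≤ Rq π a (act g x) (Ψ g x u + ρ g x) := htrans g x u
      _ = Rq π a (act g x) w := by rw [hJu]
  -- mVal is constant
  have hconst : ∀ x y : X, mVal π a y ≤ mVal π a x := by
    intro x y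
    apply le_of_forall_pos_le_add
    intro η hη
    have husc : Rq π a x (φ x) < mVal π a x + η := by
      rw [hφeq x]; linarith
    obtain ⟨δ, hδ, hu⟩ := Rq_usc hbd husc hdense
    obtain ⟨g, hg⟩ := hdenseO y x δ hδ
    calc mVal π a y ≤ mVal π a (act g y) := hmono g y
      _ ≤ Rq π a (act g y) (φ x) := mVal_le hdense hbd _ _
      _ ≤ mVal π a x + η := hu _ hg
  have hconst' : ∀ x y : X, mVal π a x = mVal π a y := fun x y =>
    le_antisymm (hconst y x) (hconst x y)
  -- equivariance of φ
  have hequiv : ∀ (g : Γ) (x : X), φ (act g x) = Ψ g x (φ x) + ρ g x := by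
    intro g x
    set y := act g x with hy
    set u : H := (Ψ g x).symm (φ y - ρ g x) with hu
    have hJu : Ψ g x u + ρ g x = φ y := by
      rw [hu, (Ψ g x).apply_symm_apply]; abel
    have h1 : Rq π a x u ≤ mVal π a x := by
      calc Rq π a x u ≤ Rq π a y (Ψ g x u + ρ g x) := htrans g x u
        _ = Rq π a y (φ y) := by rw [hJu]
        _ = mVal π a y := hφeq y
        _ = mVal π a x := (hconst' x y).symm
    have : u = φ x := unique_min hdense hbd h1 (hφ x)
    rw [← hJu, this]
  -- continuity of φ
  have hcont : Continuous φ := by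
    rw [Metric.continuous_iff]
    intro x ζ hζ
    have hη : (0:ℝ) < ζ ^ 2 / 4 := by positivity
    have husc : Rq π a x (φ x) < mVal π a x + ζ ^ 2 / 4 := by
      rw [hφeq x]; linarith
    obtain ⟨δ, hδ, hu⟩ := Rq_usc hbd husc hdense
    refine ⟨δ, hδ, fun y hy => ?_⟩
    have h1 : Rq π a y (φ x) ≤ mVal π a y + ζ ^ 2 / 4 := by
      rw [hconst' y x]
      exact hu y hy
    have hsc := Rq_strong_convex hdense hbd y (φ y) (φ x)
    have hmid : mVal π a y ≤ Rq π a y ((1/2 : ℝ) • (φ y + φ x)) := mVal_le hdense hbd y _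
    have h2 : Rq π a y (φ y) = mVal π a y := hφeq y
    have h3 : ‖φ y - φ x‖ ^ 2 ≤ ζ ^ 2 / 2 := by linarith
    have h4 : ‖φ y - φ x‖ < ζ := by nlinarith [norm_nonneg (φ y - φ x)]
    rw [dist_eq_norm]
    exact h4
  exact ⟨φ, hcont, fun g x => hequiv g x⟩
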